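/- arXiv:2403.11533 — 4 statements merged into one kernel-verified Lean document; each statement's English description precedes it below -/
import Mathlib

section
/- Let a, b, c, d, e, g be strictly positive real numbers and define f(γ₁,γ₂) = (γ₁/γ₂)a + (γ₂/γ₁)b + γ₁γ₂c + d/(γ₁γ₂) + 2γ₁e + 2g/γ₁ for γ₁, γ₂ > 0. Then f attains a minimum on the open positive quadrant {(γ₁,γ₂) : γ₁ > 0, γ₂ > 0}, and the minimizer is unique. -/
open Real Filter

private lemma exp_mid_le' (s t : ℝ) :
    Real.exp ((s + t) / 2) ≤ (Real.exp s + Real.exp t) / 2 := by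
  have h1 : Real.exp ((s + t) / 2) = Real.exp (s/2) * Real.exp (t/2) := by
    rw [← Real.exp_add]; ring_nf
  have h2 : Real.exp s = Real.exp (s/2) * Real.exp (s/2) := by
    rw [← Real.exp_add]; ring_nf
  have h3 : Real.exp t = Real.exp (t/2) * Real.exp (t/2) := by
    rw [← Real.exp_add]; ring_nf
  nlinarith [sq_nonneg (Real.exp (s/2) - Real.exp (t/2))]

private lemma exp_mid_lt' (s t : ℝ) (h : s ≠ t) :
    Real.exp ((s + t) / 2) < (Real.exp s + Real.exp t) / 2 := by
  have h1 : Real.exp ((s + t) / 2) = Real.exp (s/2) * Real.exp (t/2) := by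
    rw [← Real.exp_add]; ring_nf
  have h2 : Real.exp s = Real.exp (s/2) * Real.exp (s/2) := by
    rw [← Real.exp_add]; ring_nf
  have h3 : Real.exp t = Real.exp (t/2) * Real.exp (t/2) := by
    rw [← Real.exp_add]; ring_nf
  have hne : Real.exp (s/2) - Real.exp (t/2) ≠ 0 := by
    intro hEq
    apply h
    have hq : Real.exp (s/2) = Real.exp (t/2) := by linarith
    have := Real.exp_injective hq
    linarith
  have hp : 0 < (Real.exp (s/2) - Real.exp (t/2))^2 := by positivity
  nlinarith [hp]

private lemma term_le' (k s t : ℝ) (hk : 0 < k) :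
    k * Real.exp ((s + t) / 2) ≤ (k * Real.exp s + k * Real.exp t) / 2 := by
  have := exp_mid_le' s t
  nlinarith

private lemma term_lt' (k s t : ℝ) (hk : 0 < k) (h : s ≠ t) :
    k * Real.exp ((s + t) / 2) < (k * Real.exp s + k * Real.exp t) / 2 := by
  have := exp_mid_lt' s t h
  nlinarith

private noncomputable def Fobj (a b c d e g : ℝ) (x : ℝ × ℝ) : ℝ :=
  a * Real.exp (x.1 - x.2) + b * Real.exp (x.2 - x.1)
    + c * Real.exp (x.1 + x.2) + d * Real.exp (-(x.1 + x.2))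
    + 2 * e * Real.exp x.1 + 2 * g * Real.exp (-x.1)

private lemma Fobj_log (a b c d e g : ℝ) (q : ℝ × ℝ) (h1 : 0 < q.1) (h2 : 0 < q.2) :
    Fobj a b c d e g (Real.log q.1, Real.log q.2) =
      (q.1 / q.2) * a + (q.2 / q.1) * b + q.1 * q.2 * c + d / (q.1 * q.2)
        + 2 * q.1 * e + 2 * g / q.1 := by
  have h1' : q.1 ≠ 0 := ne_of_gt h1
  have h2' : q.2 ≠ 0 := ne_of_gt h2
  simp only [Fobj, Real.exp_sub, Real.exp_add, Real.exp_neg, Real.exp_log h1,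
    Real.exp_log h2, div_eq_mul_inv]
  ring

/-- The objective `f(γ₁,γ₂) = (γ₁/γ₂)a + (γ₂/γ₁)b + γ₁γ₂c + d/(γ₁γ₂)
+ 2γ₁e + 2g/γ₁` (with positive coefficients) attains a minimum on the open positive
quadrant, and the minimizer is unique. -/
theorem stmt3 (a b c d e g : ℝ) (ha : 0 < a) (hb : 0 < b) (hc : 0 < c)
    (hd : 0 < d) (he : 0 < e) (hg : 0 < g) :
    ∃ p : ℝ × ℝ, 0 < p.1 ∧ 0 < p.2 ∧
      (∀ q : ℝ × ℝ, 0 < q.1 → 0 < q.2 →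
        (p.1 / p.2) * a + (p.2 / p.1) * b + p.1 * p.2 * c + d / (p.1 * p.2)
            + 2 * p.1 * e + 2 * g / p.1 ≤
          (q.1 / q.2) * a + (q.2 / q.1) * b + q.1 * q.2 * c + d / (q.1 * q.2)
            + 2 * q.1 * e + 2 * g / q.1) ∧
      (∀ q : ℝ × ℝ, 0 < q.1 → 0 < q.2 →
        (∀ r : ℝ × ℝ, 0 < r.1 → 0 < r.2 →
          (q.1 / q.2) * a + (q.2 / q.1) * b + q.1 * q.2 * c + d / (q.1 * q.2)
              + 2 * q.1 * e + 2 * g / q.1 ≤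
            (r.1 / r.2) * a + (r.2 / r.1) * b + r.1 * r.2 * c + d / (r.1 * r.2)
              + 2 * r.1 * e + 2 * g / r.1) → q = p) := by
  classical
  set F : ℝ × ℝ → ℝ := Fobj a b c d e g with hF
  have hFcont : Continuous F := by
    unfold F
    unfold Fobj
    fun_prop
  -- coercivity
  have hcoer : Tendsto F (cocompact (ℝ × ℝ)) atTop := by
    rw [tendsto_atTop]
    intro M
    rw [Filter.eventually_iff, Filter.mem_cocompact]
    set M' : ℝ := max M 1 with hM'
    have hM'pos : (0:ℝ) < M' := lt_of_lt_of_le one_pos (le_max_right _ _)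
    have hMle : M ≤ M' := le_max_left _ _
    set hi1 : ℝ := Real.log (M' / (2*e)) with hhi1
    set lo1 : ℝ := -Real.log (M' / (2*g)) with hlo1
    set hi2 : ℝ := hi1 + Real.log (M' / b) with hhi2
    set lo2 : ℝ := lo1 - Real.log (M' / a) with hlo2
    clear_value M' hi1 lo1 hi2 lo2
    refine ⟨Set.Icc lo1 hi1 ×ˢ Set.Icc lo2 hi2, isCompact_Icc.prod isCompact_Icc, ?_⟩
    intro x hx
    simp only [Set.mem_compl_iff, Set.mem_prod, Set.mem_Icc, not_and_or, not_and,
      not_le] at hx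
    show M ≤ F x
    have t1 : 0 < a * Real.exp (x.1 - x.2) := by positivity
    have t2 : 0 < b * Real.exp (x.2 - x.1) := by positivity
    have t3 : 0 < c * Real.exp (x.1 + x.2) := by positivity
    have t4 : 0 < d * Real.exp (-(x.1 + x.2)) := by positivity
    have t5 : 0 < 2 * e * Real.exp x.1 := by positivity
    have t6 : 0 < 2 * g * Real.exp (-x.1) := by positivity
    have hFx : F x = a * Real.exp (x.1 - x.2) + b * Real.exp (x.2 - x.1)
        + c * Real.exp (x.1 + x.2) + d * Real.exp (-(x.1 + x.2))
        + 2 * e * Real.exp x.1 + 2 * g * Real.exp (-x.1) := rfl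
    by_cases hx1 : lo1 ≤ x.1 ∧ x.1 ≤ hi1
    · -- x.2 out of range
      have hx2 : x.2 < lo2 ∨ hi2 < x.2 := by
        rcases hx with h | h
        · rcases h with h | h
          · exact absurd hx1.1 (not_le.mpr h)
          · exact absurd hx1.2 (not_le.mpr h)
        · tauto
      rcases hx2 with h | h
      · -- x.1 - x.2 ≥ lo1 - lo2 = log (M'/a)
        have harg : Real.log (M' / a) ≤ x.1 - x.2 := by
          rw [hlo2] at h
          linarith [hx1.1]
        have hexp : M' / a ≤ Real.exp (x.1 - x.2) := by
          rw [← Real.exp_log (div_pos hM'pos ha)]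
          exact Real.exp_le_exp.mpr harg
        have hmul := mul_le_mul_of_nonneg_left hexp ha.le
        have heq : a * (M' / a) = M' := by field_simp
        rw [hFx]; linarith
      · have harg : Real.log (M' / b) ≤ x.2 - x.1 := by
          have : hi2 - hi1 = Real.log (M' / b) := by rw [hhi2]; ring
          linarith [hx1.2]
        have hexp : M' / b ≤ Real.exp (x.2 - x.1) := by
          rw [← Real.exp_log (div_pos hM'pos hb)]
          exact Real.exp_le_exp.mpr harg
        have hmul := mul_le_mul_of_nonneg_left hexp hb.le
        have heq : b * (M' / b) = M' := by field_simp
        rw [hFx]; linarith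
    · rw [not_and_or, not_le, not_le] at hx1
      rcases hx1 with h | h
      · -- x.1 < lo1 : use 2 g exp(-x.1)
        have harg : Real.log (M' / (2*g)) ≤ -x.1 := by
          rw [hlo1] at h; linarith
        have hexp : M' / (2*g) ≤ Real.exp (-x.1) := by
          rw [← Real.exp_log (div_pos hM'pos (by positivity))]
          exact Real.exp_le_exp.mpr harg
        have hmul := mul_le_mul_of_nonneg_left hexp (by positivity : (0:ℝ) ≤ 2*g)
        have heq : 2*g * (M' / (2*g)) = M' := by field_simp
        rw [hFx]; linarith
      · rw [hhi1] at h
        have harg : Real.log (M' / (2*e)) ≤ x.1 := le_of_lt h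
        have hexp : M' / (2*e) ≤ Real.exp x.1 := by
          rw [← Real.exp_log (div_pos hM'pos (by positivity))]
          exact Real.exp_le_exp.mpr harg
        have hmul := mul_le_mul_of_nonneg_left hexp (by positivity : (0:ℝ) ≤ 2*e)
        have heq : 2*e * (M' / (2*e)) = M' := by field_simp
        rw [hFx]; linarith
  obtain ⟨x₀, hx₀⟩ := hFcont.exists_forall_le hcoer
  -- uniqueness of the minimizer of F (strict convexity)
  have huniq : ∀ y : ℝ × ℝ, (∀ z, F y ≤ F z) → y = x₀ := by
    intro y hy
    by_contra hne
    have hm : F y = F x₀ := le_antisymm (hy x₀) (hx₀ y)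
    have hmid := hx₀ ((y.1 + x₀.1)/2, (y.2 + x₀.2)/2)
    have hFz : F ((y.1 + x₀.1)/2, (y.2 + x₀.2)/2) =
        a * Real.exp ((y.1 + x₀.1)/2 - (y.2 + x₀.2)/2)
        + b * Real.exp ((y.2 + x₀.2)/2 - (y.1 + x₀.1)/2)
        + c * Real.exp ((y.1 + x₀.1)/2 + (y.2 + x₀.2)/2)
        + d * Real.exp (-((y.1 + x₀.1)/2 + (y.2 + x₀.2)/2))
        + 2 * e * Real.exp ((y.1 + x₀.1)/2)
        + 2 * g * Real.exp (-((y.1 + x₀.1)/2)) := rfl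
    have hFy : F y = a * Real.exp (y.1 - y.2) + b * Real.exp (y.2 - y.1)
        + c * Real.exp (y.1 + y.2) + d * Real.exp (-(y.1 + y.2))
        + 2 * e * Real.exp y.1 + 2 * g * Real.exp (-y.1) := rfl
    have hFx0 : F x₀ = a * Real.exp (x₀.1 - x₀.2) + b * Real.exp (x₀.2 - x₀.1)
        + c * Real.exp (x₀.1 + x₀.2) + d * Real.exp (-(x₀.1 + x₀.2))
        + 2 * e * Real.exp x₀.1 + 2 * g * Real.exp (-x₀.1) := rfl
    have h1 : a * Real.exp ((y.1 + x₀.1)/2 - (y.2 + x₀.2)/2) ≤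
        (a * Real.exp (y.1 - y.2) + a * Real.exp (x₀.1 - x₀.2)) / 2 ∨
        (y.1 = x₀.1 ∧ y.2 = x₀.2) := by
      left
      rw [show (y.1 + x₀.1)/2 - (y.2 + x₀.2)/2 = ((y.1 - y.2) + (x₀.1 - x₀.2))/2 by ring]
      exact term_le' a _ _ ha
    have h2 : b * Real.exp ((y.2 + x₀.2)/2 - (y.1 + x₀.1)/2) ≤
        (b * Real.exp (y.2 - y.1) + b * Real.exp (x₀.2 - x₀.1)) / 2 := by
      rw [show (y.2 + x₀.2)/2 - (y.1 + x₀.1)/2 = ((y.2 - y.1) + (x₀.2 - x₀.1))/2 by ring]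
      exact term_le' b _ _ hb
    have h3 : c * Real.exp ((y.1 + x₀.1)/2 + (y.2 + x₀.2)/2) ≤
        (c * Real.exp (y.1 + y.2) + c * Real.exp (x₀.1 + x₀.2)) / 2 := by
      rw [show (y.1 + x₀.1)/2 + (y.2 + x₀.2)/2 = ((y.1 + y.2) + (x₀.1 + x₀.2))/2 by ring]
      exact term_le' c _ _ hc
    have h4 : d * Real.exp (-((y.1 + x₀.1)/2 + (y.2 + x₀.2)/2)) ≤
        (d * Real.exp (-(y.1 + y.2)) + d * Real.exp (-(x₀.1 + x₀.2))) / 2 := by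
      rw [show -((y.1 + x₀.1)/2 + (y.2 + x₀.2)/2) = (-(y.1 + y.2) + -(x₀.1 + x₀.2))/2 by ring]
      exact term_le' d _ _ hd
    have h6 : 2 * g * Real.exp (-((y.1 + x₀.1)/2)) ≤
        (2 * g * Real.exp (-y.1) + 2 * g * Real.exp (-x₀.1)) / 2 := by
      rw [show -((y.1 + x₀.1)/2) = (-y.1 + -x₀.1)/2 by ring]
      exact term_le' (2*g) _ _ (by positivity)
    have hcases : y.1 ≠ x₀.1 ∨ (y.1 = x₀.1 ∧ y.2 ≠ x₀.2) := by
      by_cases h : y.1 = x₀.1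
      · right
        refine ⟨h, fun h2 => hne ?_⟩
        exact Prod.ext h h2
      · left; exact h
    rcases hcases with hcase | ⟨hc1, hc2⟩
    · -- strict in term 5
      have h5 : 2 * e * Real.exp ((y.1 + x₀.1)/2) <
          (2 * e * Real.exp y.1 + 2 * e * Real.exp x₀.1) / 2 :=
        term_lt' (2*e) _ _ (by positivity) hcase
      rcases h1 with h1 | ⟨hq1, hq2⟩
      · rw [hFz] at hmid
        rw [hFx0] at hmid
        have hFyv := hFy
        have hFx0v := hFx0
        linarith [hm, hmid, h1, h2, h3, h4, h5, h6, hFy.le, hFy.ge, hFx0.le, hFx0.ge]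
      · exact hcase hq1
    · -- strict in term 1
      have h1' : a * Real.exp ((y.1 + x₀.1)/2 - (y.2 + x₀.2)/2) <
          (a * Real.exp (y.1 - y.2) + a * Real.exp (x₀.1 - x₀.2)) / 2 := by
        rw [show (y.1 + x₀.1)/2 - (y.2 + x₀.2)/2 = ((y.1 - y.2) + (x₀.1 - x₀.2))/2 by ring]
        refine term_lt' a _ _ ha ?_
        intro hEq
        apply hc2
        have : y.2 = x₀.2 := by
          have := hc1
          linarith
        exact this
      have h5 : 2 * e * Real.exp ((y.1 + x₀.1)/2) ≤
          (2 * e * Real.exp y.1 + 2 * e * Real.exp x₀.1) / 2 :=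
        term_le' (2*e) _ _ (by positivity)
      rw [hFz] at hmid
      rw [hFx0] at hmid
      linarith [hm, hmid, h1', h2, h3, h4, h5, h6, hFy.le, hFy.ge, hFx0.le, hFx0.ge]
  -- translate back
  have key : ∀ q : ℝ × ℝ, 0 < q.1 → 0 < q.2 →
      (q.1 / q.2) * a + (q.2 / q.1) * b + q.1 * q.2 * c + d / (q.1 * q.2)
        + 2 * q.1 * e + 2 * g / q.1 = F (Real.log q.1, Real.log q.2) := by
    intro q h1 h2
    rw [hF, Fobj_log a b c d e g q h1 h2]
  refine ⟨(Real.exp x₀.1, Real.exp x₀.2), Real.exp_pos _, Real.exp_pos _, ?_, ?_⟩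
  · intro q hq1 hq2
    have hp := key (Real.exp x₀.1, Real.exp x₀.2) (Real.exp_pos _) (Real.exp_pos _)
    simp only [Real.log_exp] at hp
    rw [hp, key q hq1 hq2]
    exact hx₀ _
  · intro q hq1 hq2 hqmin
    have hqF : ∀ z : ℝ × ℝ, F (Real.log q.1, Real.log q.2) ≤ F z := by
      intro z
      have h1 := key (Real.exp z.1, Real.exp z.2) (Real.exp_pos _) (Real.exp_pos _)
      simp only [Real.log_exp] at h1
      rw [← key q hq1 hq2, ← h1]
      exact hqmin (Real.exp z.1, Real.exp z.2) (Real.exp_pos _) (Real.exp_pos _)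
    have := huniq (Real.log q.1, Real.log q.2) hqF
    have h1 : Real.log q.1 = x₀.1 := congrArg Prod.fst this
    have h2 : Real.log q.2 = x₀.2 := congrArg Prod.snd this
    have : q.1 = Real.exp x₀.1 := by rw [← h1, Real.exp_log hq1]
    have : q.2 = Real.exp x₀.2 := by rw [← h2, Real.exp_log hq2]
    exact Prod.ext (by rw [← h1, Real.exp_log hq1]) (by rw [← h2, Real.exp_log hq2])
end

section
/- Let a, b, c, d, e, g be strictly positive real numbers and define f(γ₁,γ₂) = (γ₁/γ₂)a + (γ₂/γ₁)b + γ₁γ₂c + d/(γ₁γ₂) + 2γ₁e + 2g/γ₁ for γ₁, γ₂ > 0. If (γ₁*, γ₂*) with γ₁*, γ₂* > 0 is a critical point of f (both partial derivatives vanish), then γ₂* is a root of the quartic polynomial p(γ) = cb·γ⁴ + (cg + eb)·γ³ − (de + ga)·γ − da. -/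
/-- If `(γ₁*, γ₂*)` with both coordinates positive is a critical point of
`f(γ₁,γ₂) = (γ₁/γ₂)a + (γ₂/γ₁)b + γ₁γ₂c + d/(γ₁γ₂) + 2γ₁e + 2g/γ₁`,
then `γ₂*` is a root of `p(γ) = cb·γ⁴ + (cg + eb)·γ³ − (de + ga)·γ − da`. -/
theorem stmt4 (a b c d e g : ℝ) (ha : 0 < a) (hb : 0 < b) (hc : 0 < c)
    (hd : 0 < d) (he : 0 < e) (hg : 0 < g)
    (γ₁ γ₂ : ℝ) (hγ₁ : 0 < γ₁) (hγ₂ : 0 < γ₂)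
    (hcrit₁ : HasDerivAt (fun t : ℝ =>
      (t / γ₂) * a + (γ₂ / t) * b + t * γ₂ * c + d / (t * γ₂) + 2 * t * e + 2 * g / t)
      0 γ₁)
    (hcrit₂ : HasDerivAt (fun t : ℝ =>
      (γ₁ / t) * a + (t / γ₁) * b + γ₁ * t * c + d / (γ₁ * t) + 2 * γ₁ * e + 2 * g / γ₁)
      0 γ₂) :
    c * b * γ₂ ^ 4 + (c * g + e * b) * γ₂ ^ 3 - (d * e + g * a) * γ₂ - d * a = 0 := by
  have h1ne : γ₁ ≠ 0 := ne_of_gt hγ₁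
  have h2ne : γ₂ ≠ 0 := ne_of_gt hγ₂
  -- derivative in the first variable
  have H1 : HasDerivAt (fun t : ℝ =>
      (t / γ₂) * a + (γ₂ / t) * b + t * γ₂ * c + d / (t * γ₂) + 2 * t * e + 2 * g / t)
      ((1 / γ₂) * a + ((0 * γ₁ - γ₂ * 1) / γ₁ ^ 2) * b + 1 * γ₂ * c
        + (0 * (γ₁ * γ₂) - d * (1 * γ₂)) / (γ₁ * γ₂) ^ 2 + 2 * 1 * e
        + (0 * γ₁ - 2 * g * 1) / γ₁ ^ 2) γ₁ := by
    exact (((((((hasDerivAt_id γ₁).div_const γ₂).mul_const a).add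
      (((hasDerivAt_const γ₁ γ₂).div (hasDerivAt_id γ₁) h1ne).mul_const b)).add
      (((hasDerivAt_id γ₁).mul_const γ₂).mul_const c)).add
      ((hasDerivAt_const γ₁ d).div ((hasDerivAt_id γ₁).mul_const γ₂)
        (mul_ne_zero h1ne h2ne))).add
      (((hasDerivAt_id γ₁).const_mul 2).mul_const e)).add
      ((hasDerivAt_const γ₁ (2 * g)).div (hasDerivAt_id γ₁) h1ne)
  have H2 : HasDerivAt (fun t : ℝ =>
      (γ₁ / t) * a + (t / γ₁) * b + γ₁ * t * c + d / (γ₁ * t) + 2 * γ₁ * e + 2 * g / γ₁)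
      (((0 * γ₂ - γ₁ * 1) / γ₂ ^ 2) * a + (1 / γ₁) * b + γ₁ * 1 * c
        + (0 * (γ₁ * γ₂) - d * (γ₁ * 1)) / (γ₁ * γ₂) ^ 2 + 0 + 0) γ₂ := by
    exact (((((((hasDerivAt_const γ₂ γ₁).div (hasDerivAt_id γ₂) h2ne).mul_const a).add
      (((hasDerivAt_id γ₂).div_const γ₁).mul_const b)).add
      (((hasDerivAt_id γ₂).const_mul γ₁).mul_const c)).add
      ((hasDerivAt_const γ₂ d).div ((hasDerivAt_id γ₂).const_mul γ₁)
        (mul_ne_zero h1ne h2ne))).add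
      (hasDerivAt_const γ₂ (2 * γ₁ * e))).add
      (hasDerivAt_const γ₂ (2 * g / γ₁))
  have e1 := hcrit₁.unique H1
  have e2 := hcrit₂.unique H2
  field_simp at e1 e2
  have eq1 : a * γ₁ ^ 2 + 2 * e * γ₁ ^ 2 * γ₂ + c * γ₁ ^ 2 * γ₂ ^ 2
      - d - 2 * g * γ₂ - b * γ₂ ^ 2 = 0 := by
    have hne : (γ₁ ^ 4 * γ₂ ^ 2 : ℝ) ≠ 0 := by positivity
    apply mul_left_cancel₀ hne
    linear_combination -(γ₁ ^ 4 * γ₂ ^ 2) * e1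
  have eq2 : -(a * γ₁ ^ 2) - d + b * γ₂ ^ 2 + c * γ₁ ^ 2 * γ₂ ^ 2 = 0 := by
    have hne : (γ₁ ^ 2 * γ₂ ^ 2 : ℝ) ≠ 0 := by positivity
    apply mul_left_cancel₀ hne
    linear_combination -(γ₁ ^ 2 * γ₂ ^ 2) * e2
  linear_combination (a + e * γ₂ + (c * γ₂ ^ 2 - a) / 2) * eq2
    - ((c * γ₂ ^ 2 - a) / 2) * eq1
end

section
/- Let a, b, c, d, e, g be strictly positive real numbers and define f(γ₁,γ₂) = (γ₁/γ₂)a + (γ₂/γ₁)b + γ₁γ₂c + d/(γ₁γ₂) + 2γ₁e + 2g/γ₁ for γ₁, γ₂ > 0. If (b + g)/(a + e) = (d + g)/(c + e), then the point (γ₁, γ₂) with γ₂ = 1 and γ₁ = √((b + d + 2g)/(a + c + 2e)) is a critical point of f (both partial derivatives of f vanish there). -/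
/-- If `(b + g)/(a + e) = (d + g)/(c + e)` then the point
`(γ₁, γ₂) = (√((b + d + 2g)/(a + c + 2e)), 1)` is a critical point of
`f(γ₁,γ₂) = (γ₁/γ₂)a + (γ₂/γ₁)b + γ₁γ₂c + d/(γ₁γ₂) + 2γ₁e + 2g/γ₁`. -/
theorem stmt9 (a b c d e g : ℝ) (ha : 0 < a) (hb : 0 < b) (hc : 0 < c)
    (hd : 0 < d) (he : 0 < e) (hg : 0 < g)
    (hratio : (b + g) / (a + e) = (d + g) / (c + e)) :
    HasDerivAt (fun t : ℝ =>
        (t / 1) * a + (1 / t) * b + t * 1 * c + d / (t * 1) + 2 * t * e + 2 * g / t)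
      0 (Real.sqrt ((b + d + 2 * g) / (a + c + 2 * e))) ∧
    HasDerivAt (fun t : ℝ =>
        (Real.sqrt ((b + d + 2 * g) / (a + c + 2 * e)) / t) * a
          + (t / Real.sqrt ((b + d + 2 * g) / (a + c + 2 * e))) * b
          + Real.sqrt ((b + d + 2 * g) / (a + c + 2 * e)) * t * c
          + d / (Real.sqrt ((b + d + 2 * g) / (a + c + 2 * e)) * t)
          + 2 * Real.sqrt ((b + d + 2 * g) / (a + c + 2 * e)) * e
          + 2 * g / Real.sqrt ((b + d + 2 * g) / (a + c + 2 * e)))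
      0 1 := by
  set s := Real.sqrt ((b + d + 2 * g) / (a + c + 2 * e)) with hs
  have hden : (0:ℝ) < a + c + 2 * e := by linarith
  have hnum : (0:ℝ) < b + d + 2 * g := by linarith
  have hspos : 0 < s := Real.sqrt_pos.mpr (div_pos hnum hden)
  have hs0 : s ≠ 0 := ne_of_gt hspos
  have hs2 : s ^ 2 = (b + d + 2 * g) / (a + c + 2 * e) := by
    rw [hs, Real.sq_sqrt (le_of_lt (div_pos hnum hden))]
  have hs2' : s ^ 2 * (a + c + 2 * e) = b + d + 2 * g := by
    rw [hs2]; field_simp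
  have hkey : s ^ 2 * (c - a) = d - b := by
    have hae : (0:ℝ) < a + e := by linarith
    have hce : (0:ℝ) < c + e := by linarith
    have hr : (b + g) * (c + e) = (d + g) * (a + e) :=
      (div_eq_div_iff (ne_of_gt hae) (ne_of_gt hce)).mp hratio
    have h2 : (b + d + 2 * g) * (c - a) = (d - b) * (a + c + 2 * e) := by nlinarith [hr]
    rw [hs2]
    field_simp
    linarith [h2]
  constructor
  · have H : HasDerivAt (fun t : ℝ =>
        (t / 1) * a + (1 / t) * b + t * 1 * c + d / (t * 1) + 2 * t * e + 2 * g / t)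
        ((1 / 1) * a + (-(s ^ 2)⁻¹) * b + (1 * 1) * c + (-(d * 1 / (s * 1) ^ 2))
          + 2 * 1 * e + (-(2 * g * 1 / s ^ 2))) s := by
      have h1 : HasDerivAt (fun t : ℝ => (t / 1) * a) ((1 / 1) * a) s :=
        ((hasDerivAt_id s).div_const 1).mul_const a
      have h2 : HasDerivAt (fun t : ℝ => (1 / t) * b) ((-(s ^ 2)⁻¹) * b) s := by
        simpa [one_div] using (hasDerivAt_inv hs0).mul_const b
      have h3 : HasDerivAt (fun t : ℝ => t * 1 * c) ((1 * 1) * c) s :=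
        ((hasDerivAt_id s).mul_const 1).mul_const c
      have h4 : HasDerivAt (fun t : ℝ => d / (t * 1)) (-(d * 1 / (s * 1) ^ 2)) s := by
        have := ((((hasDerivAt_id s).mul_const (1:ℝ)).inv (by simpa using hs0)).const_mul d)
        simpa [div_eq_mul_inv, mul_comm, mul_left_comm, neg_div] using this
      have h5 : HasDerivAt (fun t : ℝ => 2 * t * e) (2 * 1 * e) s := by
        simpa [mul_comm, mul_assoc] using
          (((hasDerivAt_id s).const_mul (2:ℝ)).mul_const e)
      have h6 : HasDerivAt (fun t : ℝ => 2 * g / t) (-(2 * g * 1 / s ^ 2)) s := by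
        have := ((hasDerivAt_id s).inv hs0).const_mul (2 * g)
        simpa [div_eq_mul_inv, mul_comm, mul_left_comm, neg_div] using this
      exact ((((h1.add h2).add h3).add h4).add h5).add h6
    have hz : (1 / 1) * a + (-(s ^ 2)⁻¹) * b + (1 * 1) * c + (-(d * 1 / (s * 1) ^ 2))
          + 2 * 1 * e + (-(2 * g * 1 / s ^ 2)) = 0 := by
      have hs2ne : s ^ 2 ≠ 0 := pow_ne_zero 2 hs0
      field_simp
      linarith [hs2']
    rwa [hz] at H
  · have H : HasDerivAt (fun t : ℝ =>
        (s / t) * a + (t / s) * b + s * t * c + d / (s * t)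
          + 2 * s * e + 2 * g / s)
        ((-(s * 1 / (1:ℝ) ^ 2)) * a + (1 / s) * b + (s * 1) * c + (-(d * s / (s * 1) ^ 2))
          + 0 + 0) 1 := by
      have h1 : HasDerivAt (fun t : ℝ => (s / t) * a) ((-(s * 1 / (1:ℝ) ^ 2)) * a) 1 := by
        have := (((hasDerivAt_id (1:ℝ)).inv one_ne_zero).const_mul s).mul_const a
        simpa [div_eq_mul_inv, mul_comm, mul_left_comm, neg_div] using this
      have h2 : HasDerivAt (fun t : ℝ => (t / s) * b) ((1 / s) * b) 1 := by
        simpa using ((hasDerivAt_id (1:ℝ)).div_const s).mul_const b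
      have h3 : HasDerivAt (fun t : ℝ => s * t * c) ((s * 1) * c) 1 := by
        simpa [mul_comm, mul_assoc] using
          (((hasDerivAt_id (1:ℝ)).const_mul s).mul_const c)
      have h4 : HasDerivAt (fun t : ℝ => d / (s * t)) (-(d * s / (s * 1) ^ 2)) 1 := by
        have := ((((hasDerivAt_id (1:ℝ)).const_mul s).inv (by simpa using hs0)).const_mul d)
        simpa [div_eq_mul_inv, mul_comm, mul_left_comm, mul_assoc, neg_div] using this
      have h5 : HasDerivAt (fun _ : ℝ => 2 * s * e) 0 1 := hasDerivAt_const 1 _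
      have h6 : HasDerivAt (fun _ : ℝ => 2 * g / s) 0 1 := hasDerivAt_const 1 _
      exact ((((h1.add h2).add h3).add h4).add h5).add h6
    have hz : (-(s * 1 / (1:ℝ) ^ 2)) * a + (1 / s) * b + (s * 1) * c + (-(d * s / (s * 1) ^ 2))
          + 0 + 0 = 0 := by
      have hs2ne : s ^ 2 ≠ 0 := pow_ne_zero 2 hs0
      field_simp
      nlinarith [hkey]
    rwa [hz] at H
end

section
/- Let a, b, c, d, e, g be strictly positive real numbers and define f(γ₁,γ₂) = (γ₁/γ₂)a + (γ₂/γ₁)b + γ₁γ₂c + d/(γ₁γ₂) + 2γ₁e + 2g/γ₁ for γ₁, γ₂ > 0. If (γ₁*, 1) is a critical point of f for some γ₁* > 0 (i.e., the optimal γ₂ equals 1), then (b + g)/(a + e) = (d + g)/(c + e) and γ₁* = √((b + d + 2g)/(a + c + 2e)). -/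
/-- If `(γ₁*, 1)` with `γ₁* > 0` is a critical point of
`f(γ₁,γ₂) = (γ₁/γ₂)a + (γ₂/γ₁)b + γ₁γ₂c + d/(γ₁γ₂) + 2γ₁e + 2g/γ₁`, then
`(b + g)/(a + e) = (d + g)/(c + e)` and `γ₁* = √((b + d + 2g)/(a + c + 2e))`. -/
theorem stmt10 (a b c d e g : ℝ) (ha : 0 < a) (hb : 0 < b) (hc : 0 < c)
    (hd : 0 < d) (he : 0 < e) (hg : 0 < g)
    (γ₁ : ℝ) (hγ₁ : 0 < γ₁)
    (hcrit₁ : HasDerivAt (fun t : ℝ =>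
      (t / 1) * a + (1 / t) * b + t * 1 * c + d / (t * 1) + 2 * t * e + 2 * g / t)
      0 γ₁)
    (hcrit₂ : HasDerivAt (fun t : ℝ =>
      (γ₁ / t) * a + (t / γ₁) * b + γ₁ * t * c + d / (γ₁ * t) + 2 * γ₁ * e + 2 * g / γ₁)
      0 1) :
    (b + g) / (a + e) = (d + g) / (c + e) ∧
    γ₁ = Real.sqrt ((b + d + 2 * g) / (a + c + 2 * e)) := by
  have hne : γ₁ ≠ 0 := hγ₁.ne'
  -- rewrite function 1
  have hf1 : (fun t : ℝ =>
      (t / 1) * a + (1 / t) * b + t * 1 * c + d / (t * 1) + 2 * t * e + 2 * g / t)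
      = fun t : ℝ => (a + c + 2 * e) * t + (b + d + 2 * g) * t⁻¹ := by
    funext t; ring
  rw [hf1] at hcrit₁
  have hd1 : HasDerivAt (fun t : ℝ => (a + c + 2 * e) * t + (b + d + 2 * g) * t⁻¹)
      ((a + c + 2 * e) + (b + d + 2 * g) * (-(γ₁ ^ 2)⁻¹)) γ₁ := by
    have h1 := (hasDerivAt_id γ₁).const_mul (a + c + 2 * e)
    have h2 := (hasDerivAt_inv hne).const_mul (b + d + 2 * g)
    simpa [Pi.add_def] using h1.add h2
  have E1 := hd1.unique hcrit₁
  -- rewrite function 2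
  have hf2 : (fun t : ℝ =>
      (γ₁ / t) * a + (t / γ₁) * b + γ₁ * t * c + d / (γ₁ * t) + 2 * γ₁ * e + 2 * g / γ₁)
      = fun t : ℝ => (γ₁ * a + d / γ₁) * t⁻¹ + (b / γ₁ + γ₁ * c) * t
          + (2 * γ₁ * e + 2 * g / γ₁) := by
    funext t; ring
  rw [hf2] at hcrit₂
  have hd2 : HasDerivAt (fun t : ℝ => (γ₁ * a + d / γ₁) * t⁻¹ + (b / γ₁ + γ₁ * c) * t
      + (2 * γ₁ * e + 2 * g / γ₁))
      ((γ₁ * a + d / γ₁) * (-((1:ℝ) ^ 2)⁻¹) + (b / γ₁ + γ₁ * c)) 1 := by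
    have h1 := (hasDerivAt_inv ((one_ne_zero : (1:ℝ) ≠ 0))).const_mul (γ₁ * a + d / γ₁)
    have h2 := (hasDerivAt_id (1:ℝ)).const_mul (b / γ₁ + γ₁ * c)
    simpa using (h1.add h2).add_const (2 * γ₁ * e + 2 * g / γ₁)
  have E2 := hd2.unique hcrit₂
  -- polynomial forms
  have hsq : γ₁ ^ 2 ≠ 0 := pow_ne_zero _ hne
  have E1' : (a + c + 2 * e) * γ₁ ^ 2 = b + d + 2 * g := by
    field_simp at E1; linarith
  have E2' : (a - c) * γ₁ ^ 2 = b - d := by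
    field_simp at E2; nlinarith [E2]
  have heq1 : γ₁ ^ 2 * (a + e) = b + g := by linarith
  have heq2 : γ₁ ^ 2 * (c + e) = d + g := by linarith
  constructor
  · rw [div_eq_div_iff (by positivity) (by positivity)]
    nlinarith [heq1, heq2]
  · have hden : (0:ℝ) < a + c + 2 * e := by positivity
    have : (b + d + 2 * g) / (a + c + 2 * e) = γ₁ ^ 2 := by
      field_simp; linarith
    rw [this, Real.sqrt_sq hγ₁.le]
end
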